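/- Let a > 1, b ∈ ℝ and h > 0, and set f(x) = x³/3 + b·x. Then the sum of oriented integrals ∫_{-√(2h)}^{√(2h)} f(a-1-√(2h+(a-1)²-y²)) dy + ∫_{√(2h)}^{√(2h+(a+1)²)} f(a+1-√(2h+(a+1)²-y²)) dy + ∫_{√(2h+(a+1)²)}^{-√(2h+(a+1)²)} f(a+1+√(2h+(a+1)²-y²)) dy + ∫_{-√(2h+(a+1)²)}^{-√(2h)} f(a+1-√(2h+(a+1)²-y²)) dy equals M(h) := -(π/4)(a+1)²(5a²+10a+4b+5) - (15a²+4b+5)√h/√2 - (3a²+6a+2b+3)πh - (13√2/3)h^{3/2} - πh² - (1/4)(a²-2a+2h+1)(5a²-10a+4b+2h+5)·arctan(√(2h)/(a-1)) + (1/4)(a²+2a+2h+1)(5a²+10a+4b+2h+5)·arctan(√(2h)/(a+1)). -/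

import Mathlib

/-- The Melnikov function `M(h; a, b)` of the discontinuous SD oscillator. -/
noncomputable def Mel (a b h : ℝ) : ℝ :=
  -(Real.pi / 4) * (a + 1) ^ 2 * (5 * a ^ 2 + 10 * a + 4 * b + 5)
    - (15 * a ^ 2 + 4 * b + 5) * Real.sqrt h / Real.sqrt 2
    - (3 * a ^ 2 + 6 * a + 2 * b + 3) * Real.pi * h
    - (13 * Real.sqrt 2 / 3) * (h * Real.sqrt h)
    - Real.pi * h ^ 2
    - (1 / 4) * (a ^ 2 - 2 * a + 2 * h + 1) * (5 * a ^ 2 - 10 * a + 4 * b + 2 * h + 5)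
        * Real.arctan (Real.sqrt (2 * h) / (a - 1))
    + (1 / 4) * (a ^ 2 + 2 * a + 2 * h + 1) * (5 * a ^ 2 + 10 * a + 4 * b + 2 * h + 5)
        * Real.arctan (Real.sqrt (2 * h) / (a + 1))

open Real Set

/-- Antiderivative of `(c + ε√(R²-y²))³/3 + b(c + ε√(R²-y²))`. -/
noncomputable def Fant (c b R ε y : ℝ) : ℝ :=
  (c ^ 3 / 3 + b * c + c * R ^ 2) * y - c * y ^ 3 / 3
    + ε * ((c ^ 2 + b + R ^ 2 / 3)
            * (y * Real.sqrt (R ^ 2 - y ^ 2) + R ^ 2 * Real.arcsin (y / R)) / 2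
          - (y * (2 * y ^ 2 - R ^ 2) * Real.sqrt (R ^ 2 - y ^ 2)
              + R ^ 4 * Real.arcsin (y / R)) / 24)

lemma hasDerivAt_Fant (c b R ε y : ℝ) (hR : 0 < R) (hy1 : -R < y) (hy2 : y < R)
    (hε : ε ^ 2 = 1) :
    HasDerivAt (fun t => Fant c b R ε t)
      ((c + ε * Real.sqrt (R ^ 2 - y ^ 2)) ^ 3 / 3
        + b * (c + ε * Real.sqrt (R ^ 2 - y ^ 2))) y := by
  have hpos : 0 < R ^ 2 - y ^ 2 := by nlinarith
  set s := Real.sqrt (R ^ 2 - y ^ 2) with hsdef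
  have hspos : 0 < s := Real.sqrt_pos.mpr hpos
  have hs2 : s ^ 2 = R ^ 2 - y ^ 2 := Real.sq_sqrt hpos.le
  have hinner : HasDerivAt (fun t : ℝ => R ^ 2 - t ^ 2) (-(2 * y)) y := by
    simpa using (HasDerivAt.const_sub (R ^ 2) (hasDerivAt_pow 2 y))
  have hsqrt : HasDerivAt (fun t : ℝ => Real.sqrt (R ^ 2 - t ^ 2)) (-(y / s)) y := by
    have := hinner.sqrt hpos.ne'
    convert this using 1
    rw [← hsdef]
    field_simp
  have harcsin : HasDerivAt (fun t : ℝ => Real.arcsin (t / R)) (1 / s) y := by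
    have h1 : y / R ≠ -1 := by
      intro hcon
      have : y = -R := by field_simp at hcon; linarith
      linarith
    have h2 : y / R ≠ 1 := by
      intro hcon
      have : y = R := by field_simp at hcon; exact hcon
      linarith
    have hd := (Real.hasDerivAt_arcsin h1 h2).comp y ((hasDerivAt_id y).div_const R)
    have hv : Real.sqrt (1 - (y / R) ^ 2) = s / R := by
      rw [show 1 - (y / R) ^ 2 = (R ^ 2 - y ^ 2) / R ^ 2 by field_simp,
        ← hs2, show s ^ 2 / R ^ 2 = (s / R) ^ 2 by ring, Real.sqrt_sq (by positivity)]
    simp only [Function.comp_def] at hd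
    refine hd.congr_deriv (Eq.symm ?_)
    rw [hv]
    field_simp
  have h1 : HasDerivAt
      (fun t : ℝ => t * Real.sqrt (R ^ 2 - t ^ 2) + R ^ 2 * Real.arcsin (t / R)) (2 * s) y := by
    have := ((hasDerivAt_id' y).fun_mul hsqrt).fun_add (harcsin.const_mul (R ^ 2))
    refine this.congr_deriv (Eq.symm ?_)
    field_simp
    linear_combination hs2
  have h2 : HasDerivAt
      (fun t : ℝ => t * (2 * t ^ 2 - R ^ 2) * Real.sqrt (R ^ 2 - t ^ 2)
        + R ^ 4 * Real.arcsin (t / R)) (8 * y ^ 2 * s) y := by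
    have hp : HasDerivAt (fun t : ℝ => t * (2 * t ^ 2 - R ^ 2)) (6 * y ^ 2 - R ^ 2) y := by
      have := (hasDerivAt_id y).fun_mul (((hasDerivAt_pow 2 y).const_mul 2).sub_const (R ^ 2))
      refine this.congr_deriv (Eq.symm ?_)
      simp only [id_eq]
      ring
    have := (hp.fun_mul hsqrt).fun_add (harcsin.const_mul (R ^ 4))
    refine this.congr_deriv (Eq.symm ?_)
    field_simp
    linear_combination (2 * y ^ 2 + R ^ 2) * hs2
  have hpoly : HasDerivAt (fun t : ℝ => (c ^ 3 / 3 + b * c + c * R ^ 2) * t - c * t ^ 3 / 3)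
      (c ^ 3 / 3 + b * c + c * R ^ 2 - c * y ^ 2) y := by
    have := (((hasDerivAt_id y).const_mul (c ^ 3 / 3 + b * c + c * R ^ 2)).fun_sub
      (((hasDerivAt_pow 3 y).const_mul c).div_const 3))
    refine this.congr_deriv (Eq.symm ?_)
    ring
  have hF := hpoly.add ((((h1.const_mul (c ^ 2 + b + R ^ 2 / 3)).div_const 2).sub
    (h2.div_const 24)).const_mul ε)
  have heq : (c + ε * s) ^ 3 / 3 + b * (c + ε * s)
      = c ^ 3 / 3 + b * c + c * R ^ 2 - c * y ^ 2
        + ε * ((c ^ 2 + b + R ^ 2 / 3) * (2 * s) / 2 - 8 * y ^ 2 * s / 24) := by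
    linear_combination (ε * s ^ 3 / 3 + ε * s * c ^ 2 + b * ε * s
        + c * s ^ 2 - c ^ 2 * ε * s - b * ε * s) * hε
      + (c + ε ^ 3 * s / 3 + ε * s / 3 - ε ^ 3 * s / 3) * hs2
  rw [heq]
  exact hF

lemma integral_Fant (c b R l u ε : ℝ) (hR : 0 < R) (hl : -R ≤ l) (hu : u ≤ R)
    (hlu : l ≤ u) (hε : ε ^ 2 = 1) :
    (∫ y in l..u, ((c + ε * Real.sqrt (R ^ 2 - y ^ 2)) ^ 3 / 3
        + b * (c + ε * Real.sqrt (R ^ 2 - y ^ 2))))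
      = Fant c b R ε u - Fant c b R ε l := by
  apply intervalIntegral.integral_eq_sub_of_hasDerivAt_of_le hlu
  · apply Continuous.continuousOn
    unfold Fant
    have harc : Continuous fun y : ℝ => Real.arcsin (y / R) :=
      Real.continuous_arcsin.comp (continuous_id.div_const R)
    have hsq : Continuous fun y : ℝ => Real.sqrt (R ^ 2 - y ^ 2) :=
      Real.continuous_sqrt.comp (by fun_prop)
    fun_prop
  · intro y hy
    exact hasDerivAt_Fant c b R ε y hR (lt_of_le_of_lt hl hy.1) (lt_of_lt_of_le hy.2 hu) hε
  · apply Continuous.intervalIntegrable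
    have hsq : Continuous fun y : ℝ => Real.sqrt (R ^ 2 - y ^ 2) :=
      Real.continuous_sqrt.comp (by fun_prop)
    fun_prop

lemma arcsin_div_sqrt (x c : ℝ) (hx : 0 ≤ x) (hc : 0 < c) :
    Real.arcsin (x / Real.sqrt (x ^ 2 + c ^ 2)) = Real.arctan (x / c) := by
  rw [Real.arctan_eq_arcsin]
  congr 1
  have h1 : 1 + (x / c) ^ 2 = (x ^ 2 + c ^ 2) / c ^ 2 := by field_simp; ring
  have hpos : 0 < Real.sqrt (x ^ 2 + c ^ 2) := Real.sqrt_pos.mpr (by positivity)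
  rw [h1, show (x ^ 2 + c ^ 2) / c ^ 2 = (Real.sqrt (x ^ 2 + c ^ 2) / c) ^ 2 by
      rw [div_pow, Real.sq_sqrt (by positivity)],
    Real.sqrt_sq (by positivity)]
  field_simp


open Real in
/-- The sum of the four oriented integrals along the pieces of the closed level orbit
equals the Melnikov function `M(h)`. -/
theorem melnikov_integral_formula (a b h : ℝ) (ha : 1 < a) (hh : 0 < h) :
    (∫ y in (-Real.sqrt (2 * h))..(Real.sqrt (2 * h)),
        ((a - 1 - Real.sqrt (2 * h + (a - 1) ^ 2 - y ^ 2)) ^ 3 / 3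
          + b * (a - 1 - Real.sqrt (2 * h + (a - 1) ^ 2 - y ^ 2))))
      + (∫ y in (Real.sqrt (2 * h))..(Real.sqrt (2 * h + (a + 1) ^ 2)),
          ((a + 1 - Real.sqrt (2 * h + (a + 1) ^ 2 - y ^ 2)) ^ 3 / 3
            + b * (a + 1 - Real.sqrt (2 * h + (a + 1) ^ 2 - y ^ 2))))
      + (∫ y in (Real.sqrt (2 * h + (a + 1) ^ 2))..(-Real.sqrt (2 * h + (a + 1) ^ 2)),
          ((a + 1 + Real.sqrt (2 * h + (a + 1) ^ 2 - y ^ 2)) ^ 3 / 3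
            + b * (a + 1 + Real.sqrt (2 * h + (a + 1) ^ 2 - y ^ 2))))
      + (∫ y in (-Real.sqrt (2 * h + (a + 1) ^ 2))..(-Real.sqrt (2 * h)),
          ((a + 1 - Real.sqrt (2 * h + (a + 1) ^ 2 - y ^ 2)) ^ 3 / 3
            + b * (a + 1 - Real.sqrt (2 * h + (a + 1) ^ 2 - y ^ 2))))
      = Mel a b h := by
  have ha1 : (0:ℝ) < a - 1 := by linarith
  have ha2 : (0:ℝ) < a + 1 := by linarith
  unfold Mel
  set r := Real.sqrt (2 * h) with hrdef
  set R1 := Real.sqrt (2 * h + (a - 1) ^ 2) with hR1def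
  set R2 := Real.sqrt (2 * h + (a + 1) ^ 2) with hR2def
  have h2h : (0:ℝ) < 2 * h := by linarith
  have hr0 : 0 < r := Real.sqrt_pos.mpr h2h
  have hr2 : r ^ 2 = 2 * h := Real.sq_sqrt h2h.le
  have hR1pos : 0 < R1 := Real.sqrt_pos.mpr (by positivity)
  have hR2pos : 0 < R2 := Real.sqrt_pos.mpr (by positivity)
  have hR12 : R1 ^ 2 = 2 * h + (a - 1) ^ 2 := Real.sq_sqrt (by positivity)
  have hR22 : R2 ^ 2 = 2 * h + (a + 1) ^ 2 := Real.sq_sqrt (by positivity)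
  have hrR1 : r ≤ R1 := by rw [hrdef, hR1def]; exact Real.sqrt_le_sqrt (by nlinarith)
  have hrR2 : r ≤ R2 := by rw [hrdef, hR2def]; exact Real.sqrt_le_sqrt (by nlinarith)
  have e1 : ∀ y : ℝ, (a - 1 - Real.sqrt (2 * h + (a - 1) ^ 2 - y ^ 2)) ^ 3 / 3
      + b * (a - 1 - Real.sqrt (2 * h + (a - 1) ^ 2 - y ^ 2))
      = (a - 1 + (-1) * Real.sqrt (R1 ^ 2 - y ^ 2)) ^ 3 / 3
        + b * (a - 1 + (-1) * Real.sqrt (R1 ^ 2 - y ^ 2)) := by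
    intro y; rw [hR12]; ring
  have e2 : ∀ y : ℝ, (a + 1 - Real.sqrt (2 * h + (a + 1) ^ 2 - y ^ 2)) ^ 3 / 3
      + b * (a + 1 - Real.sqrt (2 * h + (a + 1) ^ 2 - y ^ 2))
      = (a + 1 + (-1) * Real.sqrt (R2 ^ 2 - y ^ 2)) ^ 3 / 3
        + b * (a + 1 + (-1) * Real.sqrt (R2 ^ 2 - y ^ 2)) := by
    intro y; rw [hR22]; ring
  have e3 : ∀ y : ℝ, (a + 1 + Real.sqrt (2 * h + (a + 1) ^ 2 - y ^ 2)) ^ 3 / 3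
      + b * (a + 1 + Real.sqrt (2 * h + (a + 1) ^ 2 - y ^ 2))
      = (a + 1 + 1 * Real.sqrt (R2 ^ 2 - y ^ 2)) ^ 3 / 3
        + b * (a + 1 + 1 * Real.sqrt (R2 ^ 2 - y ^ 2)) := by
    intro y; rw [hR22]; ring
  simp only [e1, e2, e3]
  rw [intervalIntegral.integral_symm (-R2) R2]
  rw [integral_Fant (a - 1) b R1 (-r) r (-1) hR1pos (by linarith) hrR1 (by linarith)
      (by norm_num),
    integral_Fant (a + 1) b R2 r R2 (-1) hR2pos (by linarith) le_rfl hrR2 (by norm_num),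
    integral_Fant (a + 1) b R2 (-R2) R2 1 hR2pos le_rfl le_rfl (by linarith) (by norm_num),
    integral_Fant (a + 1) b R2 (-R2) (-r) (-1) hR2pos le_rfl (by linarith)
      (by linarith) (by norm_num)]
  unfold Fant
  have s1 : Real.sqrt (R1 ^ 2 - r ^ 2) = a - 1 := by
    rw [hR12, hr2, show 2 * h + (a - 1) ^ 2 - 2 * h = (a - 1) ^ 2 by ring,
      Real.sqrt_sq ha1.le]
  have s2 : Real.sqrt (R2 ^ 2 - r ^ 2) = a + 1 := by
    rw [hR22, hr2, show 2 * h + (a + 1) ^ 2 - 2 * h = (a + 1) ^ 2 by ring,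
      Real.sqrt_sq ha2.le]
  have s0 : Real.sqrt (R2 ^ 2 - R2 ^ 2) = 0 := by rw [sub_self, Real.sqrt_zero]
  have t1 : Real.arcsin (r / R1) = Real.arctan (r / (a - 1)) := by
    have hq : R1 = Real.sqrt (r ^ 2 + (a - 1) ^ 2) := by rw [hr2]
    rw [hq]; exact arcsin_div_sqrt r (a - 1) hr0.le ha1
  have t2 : Real.arcsin (r / R2) = Real.arctan (r / (a + 1)) := by
    have hq : R2 = Real.sqrt (r ^ 2 + (a + 1) ^ 2) := by rw [hr2]
    rw [hq]; exact arcsin_div_sqrt r (a + 1) hr0.le ha2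
  have tt : Real.arcsin (R2 / R2) = Real.pi / 2 := by
    rw [div_self hR2pos.ne', Real.arcsin_one]
  simp only [neg_sq, neg_div, Real.arcsin_neg, s1, s2, s0, t1, t2, tt]
  have hs2h : r = Real.sqrt 2 * Real.sqrt h := by
    rw [hrdef]; exact Real.sqrt_mul (by norm_num) h
  have h22 : Real.sqrt 2 * Real.sqrt 2 = 2 := Real.mul_self_sqrt (by norm_num)
  have m1 : (15 * a ^ 2 + 4 * b + 5) * Real.sqrt h / Real.sqrt 2
      = (15 * a ^ 2 + 4 * b + 5) * r / 2 := by
    rw [hs2h, div_eq_div_iff (by positivity) (by norm_num)]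
    linear_combination (-(15 * a ^ 2 + 4 * b + 5) * Real.sqrt h) * h22
  have m2 : 13 * Real.sqrt 2 / 3 * (h * Real.sqrt h) = 13 / 3 * (h * r) := by
    rw [hs2h]; ring
  rw [m1, m2]
  rw [show R1 ^ 4 = (2 * h + (a - 1) ^ 2) ^ 2 by rw [← hR12]; ring,
    show R2 ^ 4 = (2 * h + (a + 1) ^ 2) ^ 2 by rw [← hR22]; ring, hR12, hR22]
  rw [show h = r ^ 2 / 2 by linarith]
  ring
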